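/- arXiv:1712.07099 — 4 statements merged into one kernel-verified Lean document; each statement's English description precedes it below -/
import Mathlib

section
/- Let k ≥ 1, let c > 1 be a real number, and let y_1, …, y_k be real numbers with y_1 ≥ 0 and y_i ≥ c·y_{i−1} for all i ∈ {2, …, k}. Then (∑_{i=1}^{k} i·y_i)·(∑_{j=1}^{k} c^j) ≥ (∑_{i=1}^{k} i·c^i)·(∑_{j=1}^{k} y_j). In particular, if ∑_{j=1}^{k} y_j > 0, then (∑_{i=1}^{k} i·y_i)/(∑_{i=1}^{k} y_i) ≥ (∑_{i=1}^{k} i·c^i)/(∑_{i=1}^{k} c^i). -/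
/-- For `k ≥ 1`, `c > 1`, and reals `y_1, …, y_k` with `y_1 ≥ 0` and
`y_i ≥ c·y_{i−1}` for `i ∈ {2, …, k}`:
`(∑ i·y_i)·(∑ c^j) ≥ (∑ i·c^i)·(∑ y_j)`, and if `∑ y_j > 0` then
`(∑ i·y_i)/(∑ y_i) ≥ (∑ i·c^i)/(∑ c^i)`. -/
theorem stmt_5 (k : ℕ) (hk : 1 ≤ k) (c : ℝ) (hc : 1 < c) (y : ℕ → ℝ)
    (hy1 : 0 ≤ y 1) (hy : ∀ i ∈ Finset.Icc 2 k, y i ≥ c * y (i - 1)) :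
    (∑ i ∈ Finset.Icc 1 k, (i : ℝ) * y i) * (∑ j ∈ Finset.Icc 1 k, c ^ j) ≥
      (∑ i ∈ Finset.Icc 1 k, (i : ℝ) * c ^ i) * (∑ j ∈ Finset.Icc 1 k, y j) ∧
    (0 < ∑ j ∈ Finset.Icc 1 k, y j →
      (∑ i ∈ Finset.Icc 1 k, (i : ℝ) * y i) / (∑ i ∈ Finset.Icc 1 k, y i) ≥
        (∑ i ∈ Finset.Icc 1 k, (i : ℝ) * c ^ i) / (∑ i ∈ Finset.Icc 1 k, c ^ i)) := by
  have hc0 : (0:ℝ) < c := lt_trans one_pos hc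
  set s := Finset.Icc 1 k with hs
  -- step relation
  have hstep : ∀ m, 1 ≤ m → m + 1 ≤ k → c * y m ≤ y (m + 1) := by
    intro m hm hmk
    have := hy (m + 1) (Finset.mem_Icc.mpr ⟨by omega, hmk⟩)
    simpa using this
  -- nonnegativity
  have ynn : ∀ i, 1 ≤ i → i ≤ k → 0 ≤ y i := by
    intro i hi hik
    induction i with
    | zero => omega
    | succ n ih =>
      rcases Nat.eq_or_lt_of_le hi with h | h
      · simpa [← h] using hy1
      · have hn1 : 1 ≤ n := by omega
        have hnk : n ≤ k := by omega
        have h0 : 0 ≤ y n := ih hn1 hnk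
        have := hstep n hn1 hik
        nlinarith
  -- monotonicity of y i / c^i, stated without division
  have hmono : ∀ i j, 1 ≤ i → i ≤ j → j ≤ k → c ^ j * y i ≤ c ^ i * y j := by
    intro i j hi hij hjk
    induction j with
    | zero => omega
    | succ n ih =>
      rcases Nat.eq_or_lt_of_le hij with h | h
      · rw [h]
      · have hin : i ≤ n := by omega
        have hn1 : 1 ≤ n := by omega
        have hnk : n ≤ k := by omega
        have h1 : c ^ n * y i ≤ c ^ i * y n := ih hin hnk
        have h2 : c * y n ≤ y (n + 1) := hstep n hn1 hjk
        have hci : (0:ℝ) < c ^ i := pow_pos hc0 i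
        calc c ^ (n+1) * y i = c * (c ^ n * y i) := by ring
          _ ≤ c * (c ^ i * y n) := by nlinarith
          _ = c ^ i * (c * y n) := by ring
          _ ≤ c ^ i * y (n+1) := by nlinarith
  -- key termwise nonnegativity
  have key : ∀ i ∈ s, ∀ j ∈ s, 0 ≤ ((i:ℝ) - j) * (y i * c ^ j - c ^ i * y j) := by
    intro i hi j hj
    rw [Finset.mem_Icc] at hi hj
    rcases le_total j i with h | h
    · apply mul_nonneg
      · have : (j:ℝ) ≤ i := by exact_mod_cast h
        linarith
      · have := hmono j i hj.1 h hi.2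
        linarith [this]
    · have h1 : ((i:ℝ) - j) ≤ 0 := by
        have : (i:ℝ) ≤ j := by exact_mod_cast h
        linarith
      have h2 : y i * c ^ j - c ^ i * y j ≤ 0 := by
        have := hmono i j hi.1 h hj.2
        linarith
      nlinarith
  have hdouble : 0 ≤ ∑ i ∈ s, ∑ j ∈ s, ((i:ℝ) - j) * (y i * c ^ j - c ^ i * y j) :=
    Finset.sum_nonneg fun i hi => Finset.sum_nonneg fun j hj => key i hi j hj
  have expand : ∑ i ∈ s, ∑ j ∈ s, ((i:ℝ) - j) * (y i * c ^ j - c ^ i * y j)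
      = 2 * ((∑ i ∈ s, (i : ℝ) * y i) * (∑ j ∈ s, c ^ j)
           - (∑ i ∈ s, (i : ℝ) * c ^ i) * (∑ j ∈ s, y j)) := by
    have h1 : ∀ i ∈ s, ∑ j ∈ s, ((i:ℝ) - j) * (y i * c ^ j - c ^ i * y j)
        = ((i:ℝ) * y i) * (∑ j ∈ s, c ^ j) - ((i:ℝ) * c ^ i) * (∑ j ∈ s, y j)
          - y i * (∑ j ∈ s, (j:ℝ) * c ^ j) + c ^ i * (∑ j ∈ s, (j:ℝ) * y j) := by
      intro i _
      rw [Finset.mul_sum, Finset.mul_sum, Finset.mul_sum, Finset.mul_sum,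
        ← Finset.sum_sub_distrib, ← Finset.sum_sub_distrib, ← Finset.sum_add_distrib]
      apply Finset.sum_congr rfl
      intro j _
      ring
    rw [Finset.sum_congr rfl h1]
    rw [Finset.sum_add_distrib, Finset.sum_sub_distrib, Finset.sum_sub_distrib,
      ← Finset.sum_mul, ← Finset.sum_mul, ← Finset.sum_mul, ← Finset.sum_mul]
    ring
  have main : (∑ i ∈ s, (i : ℝ) * y i) * (∑ j ∈ s, c ^ j) ≥
      (∑ i ∈ s, (i : ℝ) * c ^ i) * (∑ j ∈ s, y j) := by
    rw [expand] at hdouble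
    linarith
  refine ⟨main, fun hpos => ?_⟩
  have hcpos : 0 < ∑ j ∈ s, c ^ j := by
    apply Finset.sum_pos (fun j _ => pow_pos hc0 j)
    exact ⟨1, Finset.mem_Icc.mpr ⟨le_refl 1, hk⟩⟩
  rw [ge_iff_le, div_le_div_iff₀ hcpos hpos]
  linarith [main]
end

section
/- Let k ≥ 1, let ε > 0, and let x_1, …, x_k be real numbers with x_1 > 0 and x_i ≥ (2+ε)·x_{i−1} for all i ∈ {2, …, k}. Then (∑_{i=1}^{k} i·2^{-i}·x_i) / (∑_{i=1}^{k} 2^{-i}·x_i) ≥ k − 2/ε. -/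
/-- For `k ≥ 1`, `ε > 0`, and reals `x_1, …, x_k` with `x_1 > 0` and
`x_i ≥ (2+ε)·x_{i−1}` for all `i ∈ {2, …, k}`:
`(∑ i·2^{-i}·x_i) / (∑ 2^{-i}·x_i) ≥ k − 2/ε`. -/
theorem stmt_6 (k : ℕ) (hk : 1 ≤ k) (ε : ℝ) (hε : 0 < ε) (x : ℕ → ℝ)
    (hx1 : 0 < x 1) (hx : ∀ i ∈ Finset.Icc 2 k, x i ≥ (2 + ε) * x (i - 1)) :
    (∑ i ∈ Finset.Icc 1 k, (i : ℝ) * (2 : ℝ) ^ (-(i : ℤ)) * x i) /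
        (∑ i ∈ Finset.Icc 1 k, (2 : ℝ) ^ (-(i : ℤ)) * x i) ≥
      (k : ℝ) - 2 / ε := by
  set δ : ℝ := ε / 2 with hδdef
  have hδ : 0 < δ := by positivity
  set y : ℕ → ℝ := fun i => (2 : ℝ) ^ (-(i : ℤ)) * x i with hy
  -- growth of y
  have hgrow : ∀ i, 2 ≤ i → i ≤ k → (1 + δ) * y (i - 1) ≤ y i := by
    intro i h2 hik
    have hxi := hx i (Finset.mem_Icc.mpr ⟨h2, hik⟩)
    have hpow : (2 : ℝ) ^ (-((i - 1 : ℕ) : ℤ)) = 2 * (2 : ℝ) ^ (-(i : ℤ)) := by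
      have h1 : (((i - 1 : ℕ)) : ℤ) = (i : ℤ) - 1 := by omega
      rw [h1, neg_sub, sub_eq_add_neg, zpow_add₀ (by norm_num : (2:ℝ) ≠ 0)]
      norm_num
    have hpos : (0 : ℝ) < (2 : ℝ) ^ (-(i : ℤ)) := by positivity
    simp only [hy, hpow]
    have : (1 + δ) * (2 * (2 : ℝ) ^ (-(i : ℤ)) * x (i - 1))
        = (2 : ℝ) ^ (-(i : ℤ)) * ((2 + ε) * x (i - 1)) := by
      rw [hδdef]; ring
    rw [this]
    exact mul_le_mul_of_nonneg_left hxi hpos.le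
  -- positivity of y on [1, k]
  have hypos : ∀ m, 1 ≤ m → m ≤ k → 0 < y m := by
    intro m h1 hmk
    induction m, h1 using Nat.le_induction with
    | base => simp only [hy]; positivity
    | succ n hn ih =>
      have h1 : 0 < y n := ih (by omega)
      have h2 := hgrow (n + 1) (by omega) hmk
      have : n + 1 - 1 = n := by omega
      rw [this] at h2
      nlinarith
  -- Lemma A
  have hA : ∀ m, 1 ≤ m → m ≤ k →
      (∑ i ∈ Finset.Icc 1 m, y i) ≤ ((1 + δ) / δ) * y m := by
    intro m h1 hmk
    induction m, h1 using Nat.le_induction with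
    | base =>
      simp only [Finset.Icc_self, Finset.sum_singleton]
      have := hypos 1 le_rfl hk
      rw [div_mul_eq_mul_div, le_div_iff₀ hδ]
      nlinarith
    | succ n hn ih =>
      rw [Finset.sum_Icc_succ_top (by omega : 1 ≤ n + 1)]
      have ihn := ih (by omega)
      have hg := hgrow (n + 1) (by omega) hmk
      have hs : n + 1 - 1 = n := by omega
      rw [hs] at hg
      have h1 : ((1 + δ) / δ) * y n ≤ (1 / δ) * y (n + 1) := by
        rw [div_mul_eq_mul_div, div_mul_eq_mul_div, div_le_div_iff₀ hδ hδ]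
        nlinarith
      have : ((1 + δ) / δ) * y (n + 1) = (1 / δ) * y (n + 1) + y (n + 1) := by
        field_simp
      rw [this]
      linarith
  -- Lemma B
  have hB : ∀ m, 1 ≤ m → m ≤ k →
      (∑ i ∈ Finset.Icc 1 m, ((m : ℝ) - (i : ℝ)) * y i)
        ≤ (1 / δ) * ∑ i ∈ Finset.Icc 1 m, y i := by
    intro m h1 hmk
    induction m, h1 using Nat.le_induction with
    | base =>
      simp only [Finset.Icc_self, Finset.sum_singleton]
      have := hypos 1 le_rfl hk
      norm_num
      positivity
    | succ n hn ih =>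
      have ihn := ih (by omega)
      have hAn := hA n hn (by omega)
      rw [Finset.sum_Icc_succ_top (by omega : 1 ≤ n + 1),
        Finset.sum_Icc_succ_top (by omega : 1 ≤ n + 1)]
      have hsplit : ∑ i ∈ Finset.Icc 1 n, (((n + 1 : ℕ) : ℝ) - (i : ℝ)) * y i
          = (∑ i ∈ Finset.Icc 1 n, ((n : ℝ) - (i : ℝ)) * y i)
            + ∑ i ∈ Finset.Icc 1 n, y i := by
        rw [← Finset.sum_add_distrib]
        apply Finset.sum_congr rfl
        intro i _
        push_cast
        ring
      have hg := hgrow (n + 1) (by omega) hmk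
      have hs : n + 1 - 1 = n := by omega
      rw [hs] at hg
      have h1 : ((1 + δ) / δ) * y n ≤ (1 / δ) * y (n + 1) := by
        rw [div_mul_eq_mul_div, div_mul_eq_mul_div, div_le_div_iff₀ hδ hδ]
        nlinarith
      have hz : (((n + 1 : ℕ) : ℝ) - ((n + 1 : ℕ) : ℝ)) * y (n + 1) = 0 := by ring
      rw [hz, hsplit, mul_add]
      linarith
  -- conclusion
  have hS : 0 < ∑ i ∈ Finset.Icc 1 k, y i := by
    apply Finset.sum_pos
    · intro i hi
      rw [Finset.mem_Icc] at hi
      exact hypos i hi.1 hi.2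
    · exact ⟨1, Finset.mem_Icc.mpr ⟨le_rfl, hk⟩⟩
  have hBk := hB k hk le_rfl
  have hnum : (∑ i ∈ Finset.Icc 1 k, (i : ℝ) * (2 : ℝ) ^ (-(i : ℤ)) * x i)
      = ∑ i ∈ Finset.Icc 1 k, (i : ℝ) * y i := by
    apply Finset.sum_congr rfl
    intro i _
    simp only [hy]; ring
  have hexp : ∑ i ∈ Finset.Icc 1 k, ((k : ℝ) - (i : ℝ)) * y i
      = (k : ℝ) * (∑ i ∈ Finset.Icc 1 k, y i)
        - ∑ i ∈ Finset.Icc 1 k, (i : ℝ) * y i := by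
    rw [Finset.mul_sum, ← Finset.sum_sub_distrib]
    apply Finset.sum_congr rfl
    intro i _; ring
  have hkey : ((k : ℝ) - 2 / ε) * (∑ i ∈ Finset.Icc 1 k, y i)
      ≤ ∑ i ∈ Finset.Icc 1 k, (i : ℝ) * y i := by
    have h2e : (2 : ℝ) / ε = 1 / δ := by
      rw [hδdef]; field_simp
    rw [h2e]
    nlinarith [hBk, hexp]
  rw [ge_iff_le, hnum, le_div_iff₀ hS]
  exact hkey
end

section
/- Let k ≥ 1, let ε > 0, and let x_1, …, x_k be real numbers with x_1 > 0 and x_i ≥ (2+ε)·x_{i−1} for all i ∈ {2, …, k}. Then (∑_{i=1}^{k} ∑_{j=1}^{i} 2^{k-j}·x_j) / (∑_{i=1}^{k} 2^{k-i}·x_i) ≤ 1 + 2/ε. -/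
/-- For `k ≥ 1`, `ε > 0`, and reals `x_1, …, x_k` with `x_1 > 0` and
`x_i ≥ (2+ε)·x_{i−1}` for all `i ∈ {2, …, k}`:
`(∑_{i=1}^{k} ∑_{j=1}^{i} 2^{k-j}·x_j) / (∑_{i=1}^{k} 2^{k-i}·x_i) ≤ 1 + 2/ε`. -/
theorem stmt_7 (k : ℕ) (hk : 1 ≤ k) (ε : ℝ) (hε : 0 < ε) (x : ℕ → ℝ)
    (hx1 : 0 < x 1) (hx : ∀ i ∈ Finset.Icc 2 k, x i ≥ (2 + ε) * x (i - 1)) :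
    (∑ i ∈ Finset.Icc 1 k, ∑ j ∈ Finset.Icc 1 i, (2 : ℝ) ^ (k - j) * x j) /
        (∑ i ∈ Finset.Icc 1 k, (2 : ℝ) ^ (k - i) * x i) ≤ 1 + 2 / ε := by
  have xpos : ∀ i, 1 ≤ i → i ≤ k → 0 < x i := by
    intro i h1 h2
    induction i with
    | zero => omega
    | succ n ih =>
      rcases Nat.eq_or_lt_of_le h1 with h | h
      · simpa [← h] using hx1
      · have hn1 : 1 ≤ n := by omega
        have hxn := ih hn1 (by omega)
        have h2' := hx (n + 1) (by simp [Finset.mem_Icc]; omega)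
        simp only [Nat.add_sub_cancel] at h2'
        nlinarith
  set c : ℝ := 1 + 2 / ε with hc
  have key : ∀ i, 1 ≤ i → i ≤ k →
      ∑ j ∈ Finset.Icc 1 i, (2 : ℝ) ^ (k - j) * x j ≤ c * ((2 : ℝ) ^ (k - i) * x i) := by
    intro i h1 h2
    induction i with
    | zero => omega
    | succ n ih =>
      rcases Nat.eq_or_lt_of_le h1 with h | h
      · have hn : n = 0 := by omega
        subst hn
        simp only [Finset.Icc_self, Finset.sum_singleton]
        norm_num
        have hp : (0:ℝ) < (2 : ℝ) ^ (k - 1) * x 1 := by positivity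
        have hcge : 1 ≤ c := by
          have : 0 < 2 / ε := by positivity
          simp only [hc]; linarith
        exact le_mul_of_one_le_left hp.le hcge
      · have hn1 : 1 ≤ n := by omega
        have hnk : n ≤ k := by omega
        have ihn := ih hn1 hnk
        rw [Finset.sum_Icc_succ_top (by omega : 1 ≤ n + 1)]
        have hxn := xpos n hn1 hnk
        have h2' := hx (n + 1) (by simp [Finset.mem_Icc]; omega)
        simp only [Nat.add_sub_cancel] at h2'
        have hpow : (2 : ℝ) ^ (k - n) = 2 * (2 : ℝ) ^ (k - (n + 1)) := by
          rw [← pow_succ']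
          congr 1
          omega
        have hpp : (0:ℝ) < (2 : ℝ) ^ (k - (n + 1)) := by positivity
        -- a_{n+1} ≥ (1 + ε/2) a_n
        have hstep : (2 : ℝ) ^ (k - (n + 1)) * x (n + 1)
            ≥ (1 + ε / 2) * ((2 : ℝ) ^ (k - n) * x n) := by
          rw [hpow]
          nlinarith
        have hcd : c * ((2 : ℝ) ^ (k - n) * x n)
            ≤ (c - 1) * ((2 : ℝ) ^ (k - (n + 1)) * x (n + 1)) := by
          have hc1 : (c - 1) * (1 + ε / 2) = c := by
            rw [hc]; field_simp
            ring
          have h0 : 0 < c - 1 := by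
            have : 0 < 2 / ε := by positivity
            simp [hc]; linarith
          calc c * ((2 : ℝ) ^ (k - n) * x n)
              = (c - 1) * ((1 + ε / 2) * ((2 : ℝ) ^ (k - n) * x n)) := by
                simp only [hc]; field_simp; ring
            _ ≤ (c - 1) * ((2 : ℝ) ^ (k - (n + 1)) * x (n + 1)) := by
                exact mul_le_mul_of_nonneg_left hstep (le_of_lt h0)
        linarith
  have hterm : ∀ i ∈ Finset.Icc 1 k, (0:ℝ) < (2 : ℝ) ^ (k - i) * x i := by
    intro i hi
    simp only [Finset.mem_Icc] at hi
    have := xpos i hi.1 hi.2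
    positivity
  have hS : (0:ℝ) < ∑ i ∈ Finset.Icc 1 k, (2 : ℝ) ^ (k - i) * x i := by
    apply Finset.sum_pos hterm
    exact ⟨1, by simp [Finset.mem_Icc]; omega⟩
  rw [div_le_iff₀ hS]
  calc (∑ i ∈ Finset.Icc 1 k, ∑ j ∈ Finset.Icc 1 i, (2 : ℝ) ^ (k - j) * x j)
      ≤ ∑ i ∈ Finset.Icc 1 k, c * ((2 : ℝ) ^ (k - i) * x i) := by
        apply Finset.sum_le_sum
        intro i hi
        simp only [Finset.mem_Icc] at hi
        exact key i hi.1 hi.2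
    _ = c * ∑ i ∈ Finset.Icc 1 k, (2 : ℝ) ^ (k - i) * x i := by
        rw [Finset.mul_sum]
end

section
/- Let k ≥ 1 and let x_1, …, x_k be real numbers satisfying: x_1 > 0; x_i ≥ 0 for all i ∈ {1, …, k}; and x_i ≤ 2·max_{j ∈ {1, …, i−1}} x_j for all i ∈ {2, …, k}. Then for every m ∈ {1, …, k}, (∑_{i=1}^{m} 2^{-i}·x_i) / (∑_{i=1}^{k} 2^{-i}·x_i) ≥ m/k. -/
/-- For `k ≥ 1` and reals `x_1, …, x_k` with `x_1 > 0`, `x_i ≥ 0` for all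
`i ∈ {1, …, k}`, and `x_i ≤ 2·max_{j ∈ {1, …, i−1}} x_j` for `i ∈ {2, …, k}`,
for every `m ∈ {1, …, k}`:
`(∑_{i=1}^{m} 2^{-i}·x_i) / (∑_{i=1}^{k} 2^{-i}·x_i) ≥ m/k`. -/
theorem stmt_8 (k : ℕ) (hk : 1 ≤ k) (x : ℕ → ℝ)
    (hx1 : 0 < x 1) (hx0 : ∀ i ∈ Finset.Icc 1 k, 0 ≤ x i)
    (hx2 : ∀ i, ∀ h2 : 2 ≤ i, i ≤ k →
      x i ≤ 2 * (Finset.Icc 1 (i - 1)).sup' (Finset.nonempty_Icc.mpr (by omega)) x)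
    (m : ℕ) (hm : m ∈ Finset.Icc 1 k) :
    (∑ i ∈ Finset.Icc 1 m, (2 : ℝ) ^ (-(i : ℤ)) * x i) /
        (∑ i ∈ Finset.Icc 1 k, (2 : ℝ) ^ (-(i : ℤ)) * x i) ≥
      (m : ℝ) / (k : ℝ) := by
  obtain ⟨hm1, hmk⟩ := Finset.mem_Icc.mp hm
  set y : ℕ → ℝ := fun i => (2 : ℝ) ^ (-(i : ℤ)) * x i with hy
  set S : ℕ → ℝ := fun n => ∑ i ∈ Finset.Icc 1 n, y i with hSdef
  show S m / S k ≥ (m : ℝ) / (k : ℝ)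
  set M : ℕ → ℝ := fun i =>
    if h : 1 ≤ i then (Finset.Icc 1 i).sup' (Finset.nonempty_Icc.mpr h) x else 0 with hMdef
  set u : ℕ → ℝ := fun i => (2 : ℝ) ^ (-(i : ℤ)) * M i with hudef
  have hy0 : ∀ i ∈ Finset.Icc 1 k, 0 ≤ y i := by
    intro i hi
    have := hx0 i hi
    simp only [hy]
    positivity
  have hMle : ∀ i j : ℕ, 1 ≤ i → j ∈ Finset.Icc 1 i → x j ≤ M i := by
    intro i j hi hj
    simp only [hMdef, dif_pos hi]
    exact Finset.le_sup' x hj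
  have hMex : ∀ i : ℕ, 1 ≤ i → ∃ j ∈ Finset.Icc 1 i, M i = x j := by
    intro i hi
    simp only [hMdef, dif_pos hi]
    exact Finset.exists_mem_eq_sup' _ x
  have hMpos : ∀ i : ℕ, 1 ≤ i → 0 < M i := by
    intro i hi
    exact lt_of_lt_of_le hx1 (hMle i 1 hi (Finset.mem_Icc.mpr ⟨le_refl 1, hi⟩))
  have hupos : ∀ i : ℕ, 1 ≤ i → 0 < u i := by
    intro i hi
    have := hMpos i hi
    simp only [hudef]
    positivity
  -- key zpow identity
  have hzp : ∀ i : ℕ, 1 ≤ i → (2 : ℝ) ^ (-((i : ℕ) : ℤ)) * 2 = (2 : ℝ) ^ (-(((i - 1 : ℕ)) : ℤ)) := by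
    intro i hi
    have h1 : (((i - 1 : ℕ)) : ℤ) = (i : ℤ) - 1 := by omega
    rw [h1]
    rw [neg_sub, sub_eq_add_neg, zpow_add₀ (by norm_num : (2:ℝ) ≠ 0)]
    ring_nf
  have hyu : ∀ i : ℕ, 2 ≤ i → i ≤ k → y i ≤ u (i - 1) := by
    intro i h2 hik
    have hx2' : x i ≤ 2 * M (i - 1) := by
      have := hx2 i h2 hik
      simp only [hMdef, dif_pos (show 1 ≤ i - 1 by omega)]
      exact this
    have hp : (0:ℝ) ≤ (2 : ℝ) ^ (-(i : ℤ)) := by positivity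
    calc y i = (2 : ℝ) ^ (-(i : ℤ)) * x i := rfl
      _ ≤ (2 : ℝ) ^ (-(i : ℤ)) * (2 * M (i - 1)) := by
          exact mul_le_mul_of_nonneg_left hx2' hp
      _ = ((2 : ℝ) ^ (-(i : ℤ)) * 2) * M (i - 1) := by ring
      _ = u (i - 1) := by rw [hzp i (by omega)]
  have huant : ∀ i : ℕ, 1 ≤ i → i + 1 ≤ k → u (i + 1) ≤ u i := by
    intro i hi hik
    obtain ⟨j, hj, hMj⟩ := hMex (i + 1) (by omega)
    obtain ⟨hj1, hj2⟩ := Finset.mem_Icc.mp hj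
    by_cases hji : j = i + 1
    · have : u (i + 1) = y (i + 1) := by
        simp only [hudef, hy, hMj, hji]
      rw [this]
      have := hyu (i + 1) (by omega) hik
      simpa using this
    · have hjle : j ≤ i := by omega
      have h1 : M (i + 1) ≤ M i := by
        rw [hMj]
        exact hMle i j hi (Finset.mem_Icc.mpr ⟨hj1, hjle⟩)
      have h2 : ((2:ℝ)) ^ (-((i + 1 : ℕ) : ℤ)) ≤ (2:ℝ) ^ (-((i : ℕ) : ℤ)) := by
        apply zpow_le_zpow_right₀ (by norm_num : (1:ℝ) ≤ 2)
        push_cast; omega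
      have hMi : 0 ≤ M i := (hMpos i hi).le
      have hMi1 : 0 ≤ M (i + 1) := (hMpos (i+1) (by omega)).le
      calc u (i + 1) = (2:ℝ) ^ (-((i + 1 : ℕ) : ℤ)) * M (i + 1) := rfl
        _ ≤ (2:ℝ) ^ (-((i : ℕ) : ℤ)) * M i := by
            apply mul_le_mul h2 h1 hMi1 (by positivity)
        _ = u i := rfl
  have hSstep : ∀ i : ℕ, S (i + 1) = S i + y (i + 1) := by
    intro i
    simp only [hSdef]
    exact Finset.sum_Icc_succ_top (by omega) y
  have hSu : ∀ i : ℕ, 1 ≤ i → i ≤ k → (i : ℝ) * u i ≤ S i := by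
    intro i hi
    induction i, hi using Nat.le_induction with
    | base =>
      intro _
      have hM1 : M 1 = x 1 := by
        obtain ⟨j, hj, hMj⟩ := hMex 1 le_rfl
        simp only [Finset.Icc_self, Finset.mem_singleton] at hj
        rw [hMj, hj]
      simp only [hSdef, hudef, hy, hM1, Finset.Icc_self, Finset.sum_singleton]
      norm_num
    | succ i hi ih =>
      intro hik
      have ihs := ih (by omega)
      rw [hSstep i]
      have hyi1 : 0 ≤ y (i + 1) := hy0 (i + 1) (Finset.mem_Icc.mpr ⟨by omega, hik⟩)
      obtain ⟨j, hj, hMj⟩ := hMex (i + 1) (by omega)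
      obtain ⟨hj1, hj2⟩ := Finset.mem_Icc.mp hj
      by_cases hji : j = i + 1
      · have heq : u (i + 1) = y (i + 1) := by
          simp only [hudef, hy, hMj, hji]
        have hle : u (i + 1) ≤ u i := huant i hi hik
        have hstep : (i : ℝ) * u (i + 1) ≤ (i : ℝ) * u i :=
          mul_le_mul_of_nonneg_left hle (by positivity)
        have hexp : ((i + 1 : ℕ) : ℝ) * u (i + 1) = (i : ℝ) * u (i + 1) + u (i + 1) := by
          push_cast; ring
        rw [hexp, heq] at *
        linarith
      · have hjle : j ≤ i := by omega
        have h1 : M (i + 1) ≤ M i := by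
          rw [hMj]
          exact hMle i j hi (Finset.mem_Icc.mpr ⟨hj1, hjle⟩)
        have hhalf : u (i + 1) ≤ u i / 2 := by
          have hMi1 : 0 ≤ M (i + 1) := (hMpos (i+1) (by omega)).le
          have e1 : (2:ℝ) ^ (-((i + 1 : ℕ) : ℤ)) = (2:ℝ) ^ (-((i : ℕ) : ℤ)) / 2 := by
            have := hzp (i + 1) (by omega)
            simp only [Nat.add_sub_cancel] at this
            field_simp at this ⊢
            linarith
          calc u (i + 1) = (2:ℝ) ^ (-((i + 1 : ℕ) : ℤ)) * M (i + 1) := rfl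
            _ ≤ (2:ℝ) ^ (-((i + 1 : ℕ) : ℤ)) * M i := by
                apply mul_le_mul_of_nonneg_left h1 (by positivity)
            _ = u i / 2 := by rw [e1]; simp only [hudef]; ring
        have hui : 0 ≤ u i := (hupos i hi).le
        have hi1 : (1:ℝ) ≤ (i:ℝ) := by exact_mod_cast hi
        have : ((i + 1 : ℕ) : ℝ) * u (i + 1) ≤ ((i:ℝ) + 1) * (u i / 2) := by
          push_cast
          apply mul_le_mul_of_nonneg_left hhalf (by positivity)
        nlinarith
  have hum : ∀ i : ℕ, m ≤ i → i ≤ k → u i ≤ u m := by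
    intro i hmi
    induction i, hmi using Nat.le_induction with
    | base => intro _; exact le_refl _
    | succ i hi ih =>
      intro hik
      exact le_trans (huant i (by omega) hik) (ih (by omega))
  have hS0 : ∀ i : ℕ, i ≤ k → 0 ≤ S i := by
    intro i hik
    apply Finset.sum_nonneg
    intro j hj
    obtain ⟨h1, h2⟩ := Finset.mem_Icc.mp hj
    exact hy0 j (Finset.mem_Icc.mpr ⟨h1, by omega⟩)
  have hmain : ∀ i : ℕ, m ≤ i → i ≤ k → (m : ℝ) * S i ≤ (i : ℝ) * S m := by
    intro i hmi
    induction i, hmi using Nat.le_induction with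
    | base => intro _; exact le_refl _
    | succ i hi ih =>
      intro hik
      have ihs := ih (by omega)
      rw [hSstep i]
      have h1 : y (i + 1) ≤ u i := by
        have := hyu (i + 1) (by omega) hik
        simpa using this
      have h2 : (m : ℝ) * y (i + 1) ≤ S m := by
        have h3 : u i ≤ u m := hum i hi (by omega)
        have h4 : (m : ℝ) * u m ≤ S m := hSu m hm1 hmk
        have hm0 : (0:ℝ) ≤ (m:ℝ) := by positivity
        nlinarith
      push_cast
      nlinarith
  have hSk : 0 < S k := by
    have h1 : y 1 ≤ S k := by
      apply Finset.single_le_sum (f := y) (fun j hj => hy0 j hj)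
      exact Finset.mem_Icc.mpr ⟨le_rfl, hk⟩
    have h2 : 0 < y 1 := by
      simp only [hy]
      positivity
    linarith
  have hkpos : (0:ℝ) < (k:ℝ) := by exact_mod_cast hk
  rw [ge_iff_le, div_le_div_iff₀ hkpos hSk]
  have := hmain k hmk le_rfl
  linarith
end
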